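/- Let p be a prime, s ≥ p a positive integer, d ≥ 3, and l_0 an integer with 1 ≤ l_0 ≤ d − 1 < p. If r_0 ≤ s is chosen so that ord_p(l_0 + r_0 d) is maximal among 0 ≤ r ≤ s, then ord_p(l_0(l_0+d)(l_0+2d)···(l_0+sd)) ≤ ord_p(l_0 + r_0 d) + ord_p(r_0!) + ord_p((s−r_0)!) ≤ log(l_0+sd)/log p + s/(p−1). -/

import Mathlib

open Finset

lemma sum_padicValNat_factorial (p n : ℕ) (hp : p.Prime) :
    ∑ j ∈ Finset.range n, padicValNat p (j + 1) = padicValNat p (Nat.factorial n) := by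
  haveI : Fact p.Prime := ⟨hp⟩
  induction n with
  | zero => simp
  | succ n ih =>
    rw [Finset.sum_range_succ, ih, Nat.factorial_succ,
      padicValNat.mul (Nat.succ_ne_zero n) (Nat.factorial_ne_zero n), add_comm]

/-- Bound on the `p`-adic valuation of a product of terms in an arithmetic
progression: with `r₀` achieving the maximal valuation among the terms,
`ord_p(∏_{r=0}^{s} (l₀ + r d)) ≤ ord_p(l₀ + r₀ d) + ord_p(r₀!) + ord_p((s-r₀)!)
≤ log(l₀ + s d)/log p + s/(p-1)`. -/
theorem stmt15 (p : ℕ) (hp : p.Prime) (s d l₀ : ℕ) (hsp : p ≤ s) (hd : 3 ≤ d)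
    (hl1 : 1 ≤ l₀) (hld : l₀ ≤ d - 1) (hdp : d - 1 < p)
    (r₀ : ℕ) (hr₀ : r₀ ≤ s)
    (hmax : ∀ r : ℕ, r ≤ s →
      padicValNat p (l₀ + r * d) ≤ padicValNat p (l₀ + r₀ * d)) :
    padicValNat p (∏ r ∈ Finset.range (s + 1), (l₀ + r * d))
      ≤ padicValNat p (l₀ + r₀ * d) + padicValNat p (Nat.factorial r₀)
        + padicValNat p (Nat.factorial (s - r₀))
    ∧ ((padicValNat p (l₀ + r₀ * d) + padicValNat p (Nat.factorial r₀)
        + padicValNat p (Nat.factorial (s - r₀)) : ℝ)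
      ≤ Real.log (l₀ + s * d) / Real.log p + s / (p - 1)) := by
  haveI : Fact p.Prime := ⟨hp⟩
  have hLne : ∀ r : ℕ, l₀ + r * d ≠ 0 := fun r => by positivity
  have hlp : l₀ < p := lt_of_le_of_lt hld hdp
  -- valuation of product equals sum of valuations
  have hsum : padicValNat p (∏ r ∈ Finset.range (s + 1), (l₀ + r * d))
      = ∑ r ∈ Finset.range (s + 1), padicValNat p (l₀ + r * d) := by
    have h := Nat.factorization_prod (S := Finset.range (s + 1))
      (g := fun r => l₀ + r * d) (fun r _ => hLne r)
    have h2 := DFunLike.congr_fun h p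
    rw [Finsupp.finset_sum_apply] at h2
    simpa [Nat.factorization_def _ hp] using h2
  constructor
  · rw [hsum]
    by_cases hpd : p ∣ d
    · -- all valuations are zero
      have hz : ∀ r : ℕ, padicValNat p (l₀ + r * d) = 0 := by
        intro r
        apply padicValNat.eq_zero_of_not_dvd
        intro hdvd
        have : p ∣ l₀ := (Nat.dvd_add_right (Dvd.dvd.mul_left hpd r)).mp
          (by rwa [add_comm] at hdvd)
        exact absurd (Nat.le_of_dvd (by omega) this) (by omega)
      simp [hz]
    · -- p does not divide d
      have hcop : ∀ k : ℕ, Nat.Coprime (p ^ k) d :=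
        fun k => Nat.Coprime.pow_left k ((Nat.Prime.coprime_iff_not_dvd hp).mpr hpd)
      -- key bound for r ≠ r₀
      have key : ∀ r : ℕ, r ≤ s → r ≠ r₀ →
          padicValNat p (l₀ + r * d) ≤ padicValNat p (if r < r₀ then r₀ - r else r - r₀) := by
        intro r hrs hne
        set v := padicValNat p (l₀ + r * d) with hv
        have h1 : p ^ v ∣ l₀ + r * d := pow_padicValNat_dvd
        have h2 : p ^ v ∣ l₀ + r₀ * d := by
          rw [padicValNat_dvd_iff_le (hLne r₀)]
          exact hmax r hrs
        rcases lt_or_gt_of_ne hne with h | h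
        · have hsub : p ^ v ∣ (r₀ - r) * d := by
            have := Nat.dvd_sub h2 h1
            have heq : l₀ + r₀ * d - (l₀ + r * d) = (r₀ - r) * d := by
              rw [Nat.sub_mul]; omega
            rwa [heq] at this
          have : p ^ v ∣ r₀ - r := (Nat.Coprime.dvd_of_dvd_mul_right (hcop v)) hsub
          rw [if_pos h]
          exact (padicValNat_dvd_iff_le (by omega)).mp this
        · have hsub : p ^ v ∣ (r - r₀) * d := by
            have := Nat.dvd_sub h1 h2
            have heq : l₀ + r * d - (l₀ + r₀ * d) = (r - r₀) * d := by
              rw [Nat.sub_mul]; omega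
            rwa [heq] at this
          have : p ^ v ∣ r - r₀ := (Nat.Coprime.dvd_of_dvd_mul_right (hcop v)) hsub
          rw [if_neg (by omega)]
          exact (padicValNat_dvd_iff_le (by omega)).mp this
      -- split the sum
      rw [Finset.range_eq_Ico, ← Finset.sum_Ico_consecutive _ (Nat.zero_le r₀) (by omega),
        Finset.sum_eq_sum_Ico_succ_bot (by omega : r₀ < s + 1)]
      have hleft : ∑ r ∈ Finset.Ico 0 r₀, padicValNat p (l₀ + r * d)
          ≤ padicValNat p (Nat.factorial r₀) := by
        calc ∑ r ∈ Finset.Ico 0 r₀, padicValNat p (l₀ + r * d)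
            ≤ ∑ r ∈ Finset.Ico 0 r₀, padicValNat p (r₀ - r) := by
              apply Finset.sum_le_sum
              intro r hr
              rw [Finset.mem_Ico] at hr
              have := key r (by omega) (by omega)
              rwa [if_pos hr.2] at this
          _ = padicValNat p (Nat.factorial r₀) := by
              rw [← Finset.range_eq_Ico, ← sum_padicValNat_factorial p r₀ hp,
                ← Finset.sum_range_reflect]
              apply Finset.sum_congr rfl
              intro j hj
              rw [Finset.mem_range] at hj
              congr 1
              omega
      have hright : ∑ r ∈ Finset.Ico (r₀ + 1) (s + 1), padicValNat p (l₀ + r * d)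
          ≤ padicValNat p (Nat.factorial (s - r₀)) := by
        calc ∑ r ∈ Finset.Ico (r₀ + 1) (s + 1), padicValNat p (l₀ + r * d)
            ≤ ∑ r ∈ Finset.Ico (r₀ + 1) (s + 1), padicValNat p (r - r₀) := by
              apply Finset.sum_le_sum
              intro r hr
              rw [Finset.mem_Ico] at hr
              have := key r (by omega) (by omega)
              rwa [if_neg (by omega)] at this
          _ = padicValNat p (Nat.factorial (s - r₀)) := by
              rw [Finset.sum_Ico_eq_sum_range, ← sum_padicValNat_factorial p (s - r₀) hp]
              have : s + 1 - (r₀ + 1) = s - r₀ := by omega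
              rw [this]
              apply Finset.sum_congr rfl
              intro j _
              congr 1
              omega
      omega
  · -- analytic bound
    have hp2 : 2 ≤ p := hp.two_le
    have hlogp : 0 < Real.log p := Real.log_pos (by exact_mod_cast hp.one_lt)
    have hX1 : (1 : ℕ) ≤ l₀ + s * d := by omega
    -- first part: valuation bound
    have hA : (padicValNat p (l₀ + r₀ * d) : ℝ) ≤ Real.log (l₀ + s * d) / Real.log p := by
      rw [le_div_iff₀ hlogp]
      have hdvd : p ^ padicValNat p (l₀ + r₀ * d) ∣ l₀ + r₀ * d := pow_padicValNat_dvd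
      have hle : p ^ padicValNat p (l₀ + r₀ * d) ≤ l₀ + s * d := by
        have := Nat.le_of_dvd (by positivity) hdvd
        have h2 : l₀ + r₀ * d ≤ l₀ + s * d := by
          have : r₀ * d ≤ s * d := Nat.mul_le_mul_right d hr₀
          omega
        omega
      have := Real.log_le_log (by positivity)
        (by exact_mod_cast hle : ((p : ℝ) ^ padicValNat p (l₀ + r₀ * d)) ≤ ((l₀ + s * d : ℕ) : ℝ))
      rw [Real.log_pow] at this
      calc (padicValNat p (l₀ + r₀ * d) : ℝ) * Real.log p
          ≤ Real.log ((l₀ + s * d : ℕ) : ℝ) := this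
        _ = Real.log (l₀ + s * d) := by push_cast; ring_nf
    have hB : ((padicValNat p (Nat.factorial r₀) + padicValNat p (Nat.factorial (s - r₀)) : ℕ) : ℝ)
        ≤ s / (p - 1) := by
      have h1 : (p - 1) * padicValNat p (Nat.factorial r₀) ≤ r₀ := by
        rw [sub_one_mul_padicValNat_factorial]; omega
      have h2 : (p - 1) * padicValNat p (Nat.factorial (s - r₀)) ≤ s - r₀ := by
        rw [sub_one_mul_padicValNat_factorial]; omega
      have hnat : (p - 1) * (padicValNat p (Nat.factorial r₀)
          + padicValNat p (Nat.factorial (s - r₀))) ≤ s := by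
        rw [Nat.mul_add]; omega
      have hp1 : (0 : ℝ) < (p : ℝ) - 1 := by
        have : (1 : ℝ) < p := by exact_mod_cast hp.one_lt
        linarith
      rw [le_div_iff₀ hp1]
      have := (Nat.cast_le (α := ℝ)).mpr hnat
      push_cast [Nat.cast_sub (by omega : 1 ≤ p)] at this ⊢
      linarith
    push_cast at hA hB ⊢
    linarith
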